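/- For a binary covariate Z ~ Bernoulli(1/2) and additive hazards model λ(t|Z) = λ₀(t) + βZ with T|Z=0 having finite second moment, lim_{β→∞} Ω²(β) = 1 - (1/2)[2∫₀^∞ t e^{-Λ₀(t)}dt - (∫₀^∞ e^{-Λ₀(t)}dt)²] / [∫₀^∞ t e^{-Λ₀(t)}dt - (1/4)(∫₀^∞ e^{-Λ₀(t)}dt)²]. -/

import Mathlib

open MeasureTheory Real Set Filter

/-- For a binary covariate `Z ~ Bernoulli(1/2)` and the additive hazards model
`λ(t|Z) = λ₀(t) + βZ` (so `S(t|Z=0) = e^{-Λ₀(t)}` and `S(t|Z=1) = e^{-Λ₀(t)-βt}`), with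
`T|Z=0` having finite second moment, the explained variation
`Ω²(β) = 1 - E[Var(T|Z)] / Var(T)` satisfies
`lim_{β→∞} Ω²(β) = 1 - (1/2)[2∫₀^∞ t e^{-Λ₀}dt - (∫₀^∞ e^{-Λ₀}dt)²] /
[∫₀^∞ t e^{-Λ₀}dt - (1/4)(∫₀^∞ e^{-Λ₀}dt)²]`. -/
theorem explained_variation_limit_binary
    (Lam0 : ℝ → ℝ) (hmeas : Measurable Lam0) (hnonneg : ∀ t, 0 ≤ Lam0 t)
    (hfin : IntegrableOn (fun t => t * Real.exp (-Lam0 t)) (Ioi 0))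
    (M0 M1 : ℝ)
    (hM0 : M0 = ∫ t in Ioi (0:ℝ), Real.exp (-Lam0 t))
    (hM1 : M1 = ∫ t in Ioi (0:ℝ), t * Real.exp (-Lam0 t))
    (m1 s1 EVar VarT Ω2 : ℝ → ℝ)
    (hm1 : ∀ β, m1 β = ∫ t in Ioi (0:ℝ), Real.exp (-Lam0 t - β * t))
    (hs1 : ∀ β, s1 β = ∫ t in Ioi (0:ℝ), 2 * t * Real.exp (-Lam0 t - β * t))
    (hEVar : ∀ β, EVar β = (1/2) * ((2 * M1 - M0^2) + (s1 β - (m1 β)^2)))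
    (hVarT : ∀ β, VarT β = (1/2) * (2 * M1 + s1 β) - ((1/2) * (M0 + m1 β))^2)
    (hΩ : ∀ β, Ω2 β = 1 - EVar β / VarT β) :
    Tendsto Ω2 atTop
      (nhds (1 - (1/2) * (2 * M1 - M0^2) / (M1 - (1/4) * M0^2))) := by
  set S : ℝ → ℝ := fun t => Real.exp (-Lam0 t) with hS
  have hSmeas : Measurable S := hmeas.neg.exp
  have hSpos : ∀ t, 0 < S t := fun t => Real.exp_pos _
  have hSle1 : ∀ t, S t ≤ 1 := fun t => Real.exp_le_one_iff.2 (neg_nonpos.2 (hnonneg t))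
  -- pointwise limit of the integrand
  have hptw : ∀ t : ℝ, 0 < t →
      Tendsto (fun β : ℝ => Real.exp (-Lam0 t - β * t)) atTop (nhds 0) := by
    intro t ht
    have h1 : Tendsto (fun β : ℝ => -(β * t) + (-Lam0 t)) atTop atBot :=
      tendsto_atBot_add_const_right _ _
        (tendsto_neg_atTop_atBot.comp (tendsto_id.atTop_mul_const ht))
    have h2 : Tendsto (fun β : ℝ => -Lam0 t - β * t) atTop atBot :=
      h1.congr fun β => by ring
    exact Real.tendsto_exp_atBot.comp h2
  -- measurability of the integrand
  have hmeasβ : ∀ β : ℝ, Measurable fun t => Real.exp (-Lam0 t - β * t) := fun β =>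
    (hmeas.neg.sub (measurable_const.mul measurable_id)).exp
  -- m1 tends to 0
  have hm : Tendsto m1 atTop (nhds 0) := by
    have h0 : Tendsto (fun β : ℝ => ∫ t in Ioi (0:ℝ), Real.exp (-Lam0 t - β * t)) atTop
        (nhds (∫ _t in Ioi (0:ℝ), (0:ℝ))) := by
      apply tendsto_integral_filter_of_dominated_convergence (fun t => Real.exp (-t))
      · exact Eventually.of_forall fun β => (hmeasβ β).aestronglyMeasurable
      · filter_upwards [eventually_ge_atTop (1:ℝ)] with β hβ
        refine (ae_restrict_iff' measurableSet_Ioi).2 (ae_of_all _ fun t ht => ?_)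
        rw [Real.norm_eq_abs, abs_of_pos (Real.exp_pos _)]
        apply Real.exp_le_exp.2
        have h := hnonneg t
        have ht' : (0:ℝ) < t := ht
        nlinarith
      · simpa [IntegrableOn] using exp_neg_integrableOn_Ioi (0:ℝ) one_pos
      · exact (ae_restrict_iff' measurableSet_Ioi).2 (ae_of_all _ fun t ht => hptw t ht)
    have h0' : Tendsto (fun β : ℝ => ∫ t in Ioi (0:ℝ), Real.exp (-Lam0 t - β * t)) atTop
        (nhds 0) := by simpa using h0
    exact h0'.congr fun β => (hm1 β).symm
  -- s1 tends to 0
  have hs : Tendsto s1 atTop (nhds 0) := by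
    have h0 : Tendsto (fun β : ℝ => ∫ t in Ioi (0:ℝ), 2 * t * Real.exp (-Lam0 t - β * t)) atTop
        (nhds (∫ _t in Ioi (0:ℝ), (0:ℝ))) := by
      apply tendsto_integral_filter_of_dominated_convergence (fun t => 4 * Real.exp (-(1/2) * t))
      · exact Eventually.of_forall fun β =>
          ((measurable_const.mul measurable_id).mul (hmeasβ β)).aestronglyMeasurable
      · filter_upwards [eventually_ge_atTop (1:ℝ)] with β hβ
        refine (ae_restrict_iff' measurableSet_Ioi).2 (ae_of_all _ fun t ht => ?_)
        have ht' : (0:ℝ) < t := ht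
        have e1 : Real.exp (-Lam0 t - β * t) ≤ Real.exp (-t) := by
          apply Real.exp_le_exp.2
          have h := hnonneg t
          nlinarith
        have e2 : t ≤ 2 * Real.exp (t/2) := by
          have := Real.add_one_le_exp (t/2)
          linarith
        have e3 : Real.exp (t/2) * Real.exp (-t) = Real.exp (-(1/2) * t) := by
          rw [← Real.exp_add]; ring_nf
        have e4 : t * Real.exp (-Lam0 t - β * t) ≤ 2 * Real.exp (t/2) * Real.exp (-t) :=
          mul_le_mul e2 e1 (Real.exp_pos _).le (by positivity)
        rw [Real.norm_eq_abs, abs_of_pos (by positivity)]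
        nlinarith
      · exact ((exp_neg_integrableOn_Ioi (0:ℝ)
          (by norm_num : (0:ℝ) < 1/2))).const_mul 4
      · refine (ae_restrict_iff' measurableSet_Ioi).2 (ae_of_all _ fun t ht => ?_)
        have := (hptw t ht).const_mul (2 * t)
        simpa using this
    have h0' : Tendsto (fun β : ℝ => ∫ t in Ioi (0:ℝ), 2 * t * Real.exp (-Lam0 t - β * t)) atTop
        (nhds 0) := by simpa using h0
    exact h0'.congr fun β => (hs1 β).symm
  -- positivity of the limiting denominator
  have hM0nonneg : 0 ≤ M0 := by
    rw [hM0]; exact setIntegral_nonneg measurableSet_Ioi fun t _ => (hSpos t).le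
  have hM1pos : 0 < M1 := by
    rw [hM1]
    rw [setIntegral_pos_iff_support_of_nonneg_ae
      ((ae_restrict_iff' measurableSet_Ioi).2 (ae_of_all _ fun t ht =>
        mul_nonneg (le_of_lt ht) (hSpos t).le)) hfin]
    have hsub : Ioi (0:ℝ) ⊆ Function.support (fun t => t * S t) ∩ Ioi 0 := fun t ht =>
      ⟨ne_of_gt (mul_pos ht (hSpos t)), ht⟩
    calc (0:ENNReal) < volume (Ioi (0:ℝ)) := by rw [Real.volume_Ioi]; exact ENNReal.zero_lt_top
      _ ≤ _ := measure_mono hsub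
  have hD : 0 < M1 - (1/4) * M0^2 := by
    rcases eq_or_lt_of_le hM0nonneg with h0 | h0
    · rw [← h0]; simpa using hM1pos
    · set a : ℝ := M0 / 2 with ha_def
      have ha : 0 < a := by positivity
      have hSint : IntegrableOn S (Ioi 0) := by
        by_contra h
        rw [hM0, integral_undef h] at h0
        exact lt_irrefl _ h0
      have hsplit0 : M0 = (∫ t in Ioc 0 a, S t) + ∫ t in Ioi a, S t := by
        rw [hM0, ← setIntegral_union (Ioc_disjoint_Ioi le_rfl) measurableSet_Ioi
          (hSint.mono_set Ioc_subset_Ioi_self) (hSint.mono_set (Ioi_subset_Ioi ha.le)),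
          Ioc_union_Ioi_eq_Ioi ha.le]
      have hIoc_le : (∫ t in Ioc 0 a, S t) ≤ a := by
        have h1 : (∫ t in Ioc 0 a, S t) ≤ ∫ _t in Ioc 0 a, (1:ℝ) := by
          apply setIntegral_mono_on (hSint.mono_set Ioc_subset_Ioi_self)
            (integrableOn_const (by rw [Real.volume_Ioc]; exact ENNReal.ofReal_ne_top) (by simp))
            measurableSet_Ioc (fun t _ => hSle1 t)
        have h2 : (∫ _t in Ioc 0 a, (1:ℝ)) = a := by
          simp [Real.volume_Ioc, ENNReal.toReal_ofReal ha.le, ha.le]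
        linarith
      have htail : M0 / 2 ≤ ∫ t in Ioi a, S t := by
        have : a = M0 / 2 := rfl
        linarith [hsplit0, hIoc_le]
      have hsplit1 : M1 = (∫ t in Ioc 0 a, t * S t) + ∫ t in Ioi a, t * S t := by
        rw [hM1, ← setIntegral_union (Ioc_disjoint_Ioi le_rfl) measurableSet_Ioi
          (hfin.mono_set Ioc_subset_Ioi_self) (hfin.mono_set (Ioi_subset_Ioi ha.le)),
          Ioc_union_Ioi_eq_Ioi ha.le]
      have hmid_pos : 0 < ∫ t in Ioc 0 a, t * S t := by
        rw [setIntegral_pos_iff_support_of_nonneg_ae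
          ((ae_restrict_iff' measurableSet_Ioc).2 (ae_of_all _ fun t ht =>
            mul_nonneg (le_of_lt ht.1) (hSpos t).le)) (hfin.mono_set Ioc_subset_Ioi_self)]
        have hsub : Ioc (0:ℝ) a ⊆ Function.support (fun t => t * S t) ∩ Ioc 0 a := fun t ht =>
          ⟨ne_of_gt (mul_pos ht.1 (hSpos t)), ht⟩
        calc (0:ENNReal) < volume (Ioc (0:ℝ) a) := by
              rw [Real.volume_Ioc]; exact ENNReal.ofReal_pos.2 (by linarith)
          _ ≤ _ := measure_mono hsub
      have htail1 : a * (M0 / 2) ≤ ∫ t in Ioi a, t * S t := by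
        have h1 : a * (M0 / 2) ≤ a * ∫ t in Ioi a, S t :=
          mul_le_mul_of_nonneg_left htail ha.le
        have h2 : a * (∫ t in Ioi a, S t) = ∫ t in Ioi a, a * S t :=
          (integral_const_mul a _).symm
        have h3 : (∫ t in Ioi a, a * S t) ≤ ∫ t in Ioi a, t * S t := by
          apply setIntegral_mono_on ((hSint.mono_set (Ioi_subset_Ioi ha.le)).const_mul a)
            (hfin.mono_set (Ioi_subset_Ioi ha.le)) measurableSet_Ioi
            (fun t ht => mul_le_mul_of_nonneg_right (le_of_lt ht) (hSpos t).le)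
        linarith
      have haM0 : a * (M0 / 2) = (1/4) * M0^2 := by rw [ha_def]; ring
      linarith [hsplit1, hmid_pos, htail1]
  -- combine
  have hE : Tendsto EVar atTop (nhds ((1/2) * (2 * M1 - M0^2))) := by
    have h := ((tendsto_const_nhds (x := 2 * M1 - M0^2) (f := atTop)).add
      (hs.sub (hm.pow 2))).const_mul (1/2)
    have h' : Tendsto (fun β => (1/2) * ((2 * M1 - M0^2) + (s1 β - (m1 β)^2))) atTop
        (nhds ((1/2) * (2 * M1 - M0^2))) := by simpa using h
    exact h'.congr fun β => (hEVar β).symm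
  have hV : Tendsto VarT atTop (nhds (M1 - (1/4) * M0^2)) := by
    have h := ((tendsto_const_nhds (x := 2 * M1) (f := atTop)).add hs).const_mul (1/2) |>.sub
      ((((tendsto_const_nhds (x := M0) (f := atTop)).add hm).const_mul (1/2)).pow 2)
    have heq : (1/2) * (2 * M1 + 0) - ((1/2) * (M0 + 0))^2 = M1 - (1/4) * M0^2 := by ring
    rw [heq] at h
    exact h.congr fun β => (hVarT β).symm
  have hDne : M1 - (1/4) * M0^2 ≠ 0 := ne_of_gt hD
  have hfinal := (tendsto_const_nhds (x := (1:ℝ)) (f := atTop)).sub (hE.div hV hDne)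
  exact hfinal.congr fun β => (hΩ β).symm
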